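/- Let A, B ⊆ ℝⁿ be nonempty closed convex sets and let D = {(x, y) ∈ A × B : ‖x − y‖ = dist(A, B)}, where dist(A, B) = inf{‖a − b‖ : a ∈ A, b ∈ B}. If (x, y) ∈ D, α ∈ (0, 1) and w = (1 − α)x + αy, then P_A(w) = x and P_B(w) = y. -/

import Mathlib

open RealInnerProductSpace

/-- `P` is the orthogonal projection onto `C`: for each `x`, `P x ∈ C` and `P x`
minimizes the distance from `x` to points of `C`. -/
def IsProjOn {n : ℕ} (C : Set (EuclideanSpace ℝ (Fin n)))
    (P : EuclideanSpace ℝ (Fin n) → EuclideanSpace ℝ (Fin n)) : Prop :=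
  ∀ x, P x ∈ C ∧ ∀ y ∈ C, ‖x - P x‖ ≤ ‖x - y‖

lemma proj_eq_of_inner {n : ℕ} (C : Set (EuclideanSpace ℝ (Fin n)))
    (P : EuclideanSpace ℝ (Fin n) → EuclideanSpace ℝ (Fin n)) (hP : IsProjOn C P)
    (x w : EuclideanSpace ℝ (Fin n)) (hx : x ∈ C)
    (h : ∀ a ∈ C, (inner ℝ (w - x) (a - x) : ℝ) ≤ 0) : P w = x := by
  have h1 : ‖w - P w‖ ≤ ‖w - x‖ := (hP w).2 x hx
  have h3 : (inner ℝ (w - x) (P w - x) : ℝ) ≤ 0 := h (P w) (hP w).1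
  have h2 : ‖w - P w‖ ^ 2 = ‖w - x‖ ^ 2 - 2 * (inner ℝ (w - x) (P w - x) : ℝ) + ‖P w - x‖ ^ 2 := by
    have e : w - P w = (w - x) - (P w - x) := by abel
    rw [e, @norm_sub_sq_real]
  have h4 : ‖P w - x‖ ^ 2 ≤ 0 := by
    nlinarith [norm_nonneg (w - P w), norm_nonneg (w - x)]
  have h5 : ‖P w - x‖ = 0 := by nlinarith [norm_nonneg (P w - x)]
  exact sub_eq_zero.mp (norm_eq_zero.mp h5)

set_option maxHeartbeats 1000000 in
/-- Variational inequality: if `x ∈ C` minimizes distance to `u` over convex `C`. -/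
lemma inner_le_zero_of_min {n : ℕ} (C : Set (EuclideanSpace ℝ (Fin n)))
    (hC : Convex ℝ C) (x u : EuclideanSpace ℝ (Fin n)) (hx : x ∈ C)
    (hmin : ∀ a ∈ C, ‖u - x‖ ≤ ‖u - a‖) :
    ∀ a ∈ C, (inner ℝ (u - x) (a - x) : ℝ) ≤ 0 := by
  have : Nonempty C := ⟨⟨x, hx⟩⟩
  have heq : ‖u - x‖ = ⨅ w : C, ‖u - (w : EuclideanSpace ℝ (Fin n))‖ := by
    apply le_antisymm
    · exact le_ciInf fun z => hmin z z.2
    · have hb : BddBelow (Set.range fun w : C => ‖u - (w : EuclideanSpace ℝ (Fin n))‖) := by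
        refine ⟨0, ?_⟩
        rintro r ⟨z, rfl⟩
        exact norm_nonneg _
      exact ciInf_le hb (⟨x, hx⟩ : C)
  exact (norm_eq_iInf_iff_real_inner_le_zero hC hx).mp heq

theorem proj_of_convexComb_of_realize_dist {n : ℕ}
    (A B : Set (EuclideanSpace ℝ (Fin n)))
    (hAne : A.Nonempty) (hAcl : IsClosed A) (hAcv : Convex ℝ A)
    (hBne : B.Nonempty) (hBcl : IsClosed B) (hBcv : Convex ℝ B)
    (PA PB : EuclideanSpace ℝ (Fin n) → EuclideanSpace ℝ (Fin n))
    (hPA : IsProjOn A PA) (hPB : IsProjOn B PB)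
    (x y : EuclideanSpace ℝ (Fin n)) (hx : x ∈ A) (hy : y ∈ B)
    (hd : ‖x - y‖ = sInf {d : ℝ | ∃ a ∈ A, ∃ b ∈ B, d = ‖a - b‖})
    (α : ℝ) (hα : α ∈ Set.Ioo (0 : ℝ) 1)
    (w : EuclideanSpace ℝ (Fin n)) (hw : w = (1 - α) • x + α • y) :
    PA w = x ∧ PB w = y := by
  obtain ⟨hα0, hα1⟩ := hα
  set S := {d : ℝ | ∃ a ∈ A, ∃ b ∈ B, d = ‖a - b‖} with hS
  have hbdd : BddBelow S := ⟨0, fun d ⟨a, _, b, _, hd'⟩ => hd' ▸ norm_nonneg _⟩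
  have hlb : ∀ a ∈ A, ∀ b ∈ B, ‖x - y‖ ≤ ‖a - b‖ := fun a ha b hb =>
    hd ▸ csInf_le hbdd ⟨a, ha, b, hb, rfl⟩
  -- x minimizes ‖y - a‖ over A
  have hminA : ∀ a ∈ A, ‖y - x‖ ≤ ‖y - a‖ := fun a ha => by
    rw [norm_sub_rev, norm_sub_rev y a]; exact hlb a ha y hy
  have hminB : ∀ b ∈ B, ‖x - y‖ ≤ ‖x - b‖ := fun b hb => hlb x hx b hb
  have hA := inner_le_zero_of_min A hAcv x y hx hminA
  have hB := inner_le_zero_of_min B hBcv y x hy hminB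
  have hwx : w - x = α • (y - x) := by rw [hw]; module
  have hwy : w - y = (1 - α) • (x - y) := by rw [hw]; module
  constructor
  · refine proj_eq_of_inner A PA hPA x w hx fun a ha => ?_
    rw [hwx, real_inner_smul_left]
    exact mul_nonpos_of_nonneg_of_nonpos hα0.le (hA a ha)
  · refine proj_eq_of_inner B PB hPB y w hy fun b hb => ?_
    rw [hwy, real_inner_smul_left]
    exact mul_nonpos_of_nonneg_of_nonpos (by linarith) (hB b hb)
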